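/- There exists a constant c > 0 such that for all 0 ≤ r₁ < r₂ ≤ ∞ with r₂ ≥ 2r₁, and every C¹ function φ on [r₁,r₂] ∩ (0,∞) with ‖φ‖_{H([r₁,r₂])} := (∫_{r₁}^{r₂} ((φ'(r))² + φ(r)²/r²) r dr)^{1/2} < ∞, one has sup_{r ∈ [r₁,r₂] ∩ (0,∞)} |φ(r)| ≤ c · ‖φ‖_{H([r₁,r₂])}. -/

import Mathlib

open MeasureTheory Filter Topology Set
open scoped ENNReal

noncomputable section

/-- `G(x) = ∫₀ˣ |g(y)| dy`. -/
def Gfun (g : ℝ → ℝ) (x : ℝ) : ℝ := ∫ y in (0:ℝ)..x, |g y|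

/-- Assumption (A1): `G(x) → ±∞` as `x → ±∞`. -/
def A1 (g : ℝ → ℝ) : Prop := Tendsto (Gfun g) atTop atTop ∧ Tendsto (Gfun g) atBot atBot

/-- Assumption (A2): the zero set `𝒱` of `g` is discrete. -/
def A2 (g : ℝ → ℝ) : Prop :=
  ∀ ℓ : ℝ, g ℓ = 0 → ∃ ε > 0, ∀ x : ℝ, g x = 0 → |x - ℓ| < ε → x = ℓ

/-- Assumption (A3): `g'(ℓ) ∈ {−1,1}` for every zero `ℓ` of `g`. -/
def A3 (g : ℝ → ℝ) : Prop := ∀ ℓ : ℝ, g ℓ = 0 → deriv g ℓ = 1 ∨ deriv g ℓ = -1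

/-- Time derivative `∂ₜψ(t,r)`. -/
def pdt (ψ : ℝ → ℝ → ℝ) (t r : ℝ) : ℝ := deriv (fun s => ψ s r) t
/-- Radial derivative `∂ᵣψ(t,r)`. -/
def pdr (ψ : ℝ → ℝ → ℝ) (t r : ℝ) : ℝ := deriv (fun ρ => ψ t ρ) r
/-- Second time derivative `∂ₜₜψ(t,r)`. -/
def pdtt (ψ : ℝ → ℝ → ℝ) (t r : ℝ) : ℝ := deriv (fun s => pdt ψ s r) t
/-- Second radial derivative `∂ᵣᵣψ(t,r)`. -/
def pdrr (ψ : ℝ → ℝ → ℝ) (t r : ℝ) : ℝ := deriv (fun ρ => pdr ψ t ρ) r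

/-- Energy of a pair `(φ₀, φ₁)` on a set `s ⊆ (0,∞)` of radii:
`∫_s (φ₁² + (∂ᵣφ₀)² + g(φ₀)²/r²) r dr`. -/
def energyOn (g : ℝ → ℝ) (φ₀ φ₁ : ℝ → ℝ) (s : Set ℝ) : ℝ≥0∞ :=
  ∫⁻ r in s, ENNReal.ofReal (((φ₁ r)^2 + (deriv φ₀ r)^2 + (g (φ₀ r))^2 / r^2) * r)

/-- Squared `H × L²` norm of a pair `(φ₀, φ₁)` on a set `s ⊆ (0,∞)` of radii:
`∫_s (φ₁² + (∂ᵣφ₀)² + φ₀²/r²) r dr`. -/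
def HLnormSqOn (φ₀ φ₁ : ℝ → ℝ) (s : Set ℝ) : ℝ≥0∞ :=
  ∫⁻ r in s, ENNReal.ofReal (((φ₁ r)^2 + (deriv φ₀ r)^2 + (φ₀ r)^2 / r^2) * r)

/-- Squared `H` norm of a single function on a set `s ⊆ (0,∞)` of radii. -/
def HnormSqOn (φ : ℝ → ℝ) (s : Set ℝ) : ℝ≥0∞ :=
  ∫⁻ r in s, ENNReal.ofReal (((deriv φ r)^2 + (φ r)^2 / r^2) * r)

/-- `ψ` is a classical solution of the equivariant wave map equation (WM) on `I × (0,∞)`. -/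
def IsWaveMapOn (g : ℝ → ℝ) (ψ : ℝ → ℝ → ℝ) (I : Set ℝ) : Prop :=
  ContDiffOn ℝ 2 (fun p : ℝ × ℝ => ψ p.1 p.2) (I ×ˢ Ioi (0:ℝ)) ∧
  ∀ t ∈ I, ∀ r ∈ Ioi (0:ℝ),
    pdtt ψ t r - pdrr ψ t r - pdr ψ t r / r + g (ψ t r) * deriv g (ψ t r) / r^2 = 0

/-- `φ` is a classical solution of the linearized equation (LW) with coefficient `k²` on
`I × (0,∞)`. -/
def IsLinWaveOn (k : ℝ) (φ : ℝ → ℝ → ℝ) (I : Set ℝ) : Prop :=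
  ContDiffOn ℝ 2 (fun p : ℝ × ℝ => φ p.1 p.2) (I ×ˢ Ioi (0:ℝ)) ∧
  ∀ t ∈ I, ∀ r ∈ Ioi (0:ℝ),
    pdtt φ t r - pdrr φ t r - pdr φ t r / r + k^2 * φ t r / r^2 = 0

/-- A finite-energy classical solution of the linearized equation (LW), defined for all times. -/
def IsFiniteEnergyLinWave (k : ℝ) (φ : ℝ → ℝ → ℝ) : Prop :=
  IsLinWaveOn k φ univ ∧ ∃ C : ℝ≥0∞, C < ⊤ ∧ ∀ t : ℝ, HLnormSqOn (φ t) (pdt φ t) (Ioi 0) ≤ C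

/-- A (possibly constant) harmonic map: a finite-energy `C²` solution of
`Q'' + Q'/r = f(Q)/r²` on `(0,∞)`, together with its limits at `r = 0` and `r = ∞`,
which belong to the zero set `𝒱` of `g`. -/
structure HarmonicMap (g : ℝ → ℝ) where
  Q : ℝ → ℝ
  Q0 : ℝ
  Qinf : ℝ
  smooth : ContDiffOn ℝ 2 Q (Ioi 0)
  eqn : ∀ r ∈ Ioi (0:ℝ), deriv (deriv Q) r + deriv Q r / r = g (Q r) * deriv g (Q r) / r^2
  finiteEnergy : energyOn g Q (fun _ => 0) (Ioi 0) < ⊤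
  lim_zero : Tendsto Q (𝓝[>] (0:ℝ)) (𝓝 Q0)
  lim_infty : Tendsto Q atTop (𝓝 Qinf)
  zero_mem : g Q0 = 0
  infty_mem : g Qinf = 0

/-- The interval `[r₁, r₂] ∩ (0,∞)`, where `r₂` may be `+∞` (an extended real). -/
def sIcc (r₁ : ℝ) (r₂ : EReal) : Set ℝ := {r : ℝ | r₁ ≤ r ∧ (r : EReal) ≤ r₂} ∩ Ioi 0

/-- The open interval `(r₁, r₂)`, where `r₂` may be `+∞` (an extended real). -/
def sIoo (r₁ : ℝ) (r₂ : EReal) : Set ℝ := {r : ℝ | r₁ < r ∧ (r : EReal) < r₂}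

/-- The filter of approach to the (possibly infinite) point `b` within the set `s ⊆ ℝ`. -/
def approach (s : Set ℝ) (b : EReal) : Filter ℝ :=
  Filter.comap (fun r : ℝ => (r : EReal)) (𝓝 b) ⊓ Filter.principal s

end

/-- weighted Sobolev embedding on intervals `[r₁,r₂]` with `r₂ ≥ 2r₁`:
there is a universal constant `c > 0` such that
`‖φ‖_{L^∞([r₁,r₂])} ≤ c ‖φ‖_{H([r₁,r₂])}`, where `r₂` may be `+∞`. -/
theorem weighted_sobolev_embedding :
    ∃ c > (0:ℝ), ∀ (r₁ : ℝ) (r₂ : EReal), 0 ≤ r₁ → (r₁ : EReal) < r₂ →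
      ((2 * r₁ : ℝ) : EReal) ≤ r₂ →
      ∀ φ : ℝ → ℝ, ContDiffOn ℝ 1 φ (sIcc r₁ r₂) →
      HnormSqOn φ (sIcc r₁ r₂) < ⊤ →
      ∀ r ∈ sIcc r₁ r₂,
        ENNReal.ofReal |φ r| ≤
          ENNReal.ofReal c * (HnormSqOn φ (sIcc r₁ r₂)) ^ ((1:ℝ)/2) := by
  refine ⟨Real.sqrt 3, Real.sqrt_pos.mpr (by norm_num), ?_⟩
  intro r₁ r₂ h0 hlt h2 φ hφ hfin r hr
  set S := sIcc r₁ r₂ with hSdef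
  set N := HnormSqOn φ S with hNdef
  have hNtop : N ≠ ⊤ := hfin.ne
  set M2 := N.toReal with hM2def
  have hM2nn : 0 ≤ M2 := ENNReal.toReal_nonneg
  have hNeq : N = ENNReal.ofReal M2 := (ENNReal.ofReal_toReal hNtop).symm
  have hmemS : ∀ x : ℝ, x ∈ S ↔ (r₁ ≤ x ∧ (x : EReal) ≤ r₂) ∧ 0 < x := by
    intro x; rfl
  -- any sub-lintegral of the integrand is ≤ N
  have hsubN : ∀ T : Set ℝ, T ⊆ S →
      (∫⁻ x in T, ENNReal.ofReal (((deriv φ x)^2 + (φ x)^2 / x^2) * x)) ≤ N := by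
    intro T hT
    exact lintegral_mono' (Measure.restrict_mono hT le_rfl) le_rfl
  -- Icc between points of S stays in S
  have hIccS : ∀ p q : ℝ, p ∈ S → q ∈ S → Icc p q ⊆ S := by
    intro p q hp hq x hx
    rw [hmemS] at *
    exact ⟨⟨le_trans hp.1.1 hx.1, le_trans (EReal.coe_le_coe_iff.mpr hx.2) hq.1.2⟩,
      lt_of_lt_of_le hp.2 hx.1⟩
  -- find a with [a, 2a] ⊆ S
  obtain ⟨a, ha0, haS⟩ : ∃ a : ℝ, 0 < a ∧ Icc a (2*a) ⊆ S := by
    induction r₂ with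
    | bot => exact absurd hlt (not_lt.mpr bot_le)
    | coe b =>
      have hb : r₁ < b := EReal.coe_lt_coe_iff.mp hlt
      have h2b : 2 * r₁ ≤ b := EReal.coe_le_coe_iff.mp h2
      have hbpos : 0 < b := lt_of_le_of_lt h0 hb
      refine ⟨max r₁ (b/4), lt_max_of_lt_right (by linarith), ?_⟩
      intro x hx
      have h1 : max r₁ (b/4) ≤ x := hx.1
      have hub : 2 * max r₁ (b/4) ≤ b := by
        rcases le_total r₁ (b/4) with h | h
        · rw [max_eq_right h]; linarith
        · rw [max_eq_left h]; linarith
      rw [hmemS]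
      refine ⟨⟨le_trans (le_max_left _ _) h1, ?_⟩, lt_of_lt_of_le (by positivity : (0:ℝ) < b/4) (le_trans (le_max_right _ _) h1)⟩
      exact EReal.coe_le_coe_iff.mpr (by linarith [hx.2] : x ≤ b)
    | top =>
      refine ⟨r₁ + 1, by linarith, ?_⟩
      intro x hx
      rw [hmemS]
      exact ⟨⟨by linarith [hx.1], le_top⟩, by linarith [hx.1]⟩
  -- minimum point of φ² on [a, 2a]
  have haSub : Icc a (2*a) ⊆ S := haS
  obtain ⟨s₀, hs₀mem, hs₀min⟩ :=
    isCompact_Icc.exists_isMinOn (nonempty_Icc.mpr (by linarith))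
      (((hφ.continuousOn).mono haSub).pow 2 : ContinuousOn (fun x => (φ x)^2) (Icc a (2*a)))
  have hs₀S : s₀ ∈ S := haSub hs₀mem
  have hrS : r ∈ S := hr
  -- Claim 1: (φ s₀)² ≤ 2 * M2
  have hsmall : (φ s₀)^2 ≤ 2 * M2 := by
    set m := (φ s₀)^2 with hm
    have hmnn : 0 ≤ m := sq_nonneg _
    have hconst : (∫⁻ x in Icc a (2*a), ENNReal.ofReal (m/(2*a))) = ENNReal.ofReal (m/2) := by
      rw [setLIntegral_const, Real.volume_Icc, ← ENNReal.ofReal_mul (by positivity)]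
      congr 1
      field_simp
      ring
    have hmono : (∫⁻ x in Icc a (2*a), ENNReal.ofReal (m/(2*a)))
        ≤ ∫⁻ x in Icc a (2*a), ENNReal.ofReal (((deriv φ x)^2 + (φ x)^2 / x^2) * x) := by
      refine lintegral_mono_ae ((ae_restrict_iff' measurableSet_Icc).mpr (ae_of_all _ ?_))
      intro x hx
      have hx0 : 0 < x := lt_of_lt_of_le ha0 hx.1
      have hmφ : m ≤ (φ x)^2 := hs₀min hx
      apply ENNReal.ofReal_le_ofReal
      have he : ((deriv φ x)^2 + (φ x)^2 / x^2) * x = (deriv φ x)^2 * x + (φ x)^2 / x := by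
        field_simp
      rw [he]
      have h1 : m / (2*a) ≤ (φ x)^2 / x := by
        calc m / (2*a) ≤ m / x := by
              apply div_le_div_of_nonneg_left hmnn hx0 hx.2
          _ ≤ (φ x)^2 / x := by gcongr
      nlinarith [mul_nonneg (sq_nonneg (deriv φ x)) hx0.le]
    have : ENNReal.ofReal (m/2) ≤ ENNReal.ofReal M2 := by
      rw [← hconst, ← hNeq]; exact le_trans hmono (hsubN _ haSub)
    have := (ENNReal.ofReal_le_ofReal_iff hM2nn).mp this
    linarith
  -- Claim 2: oscillation bound
  have hosc : ∀ p q : ℝ, p ∈ S → q ∈ S → p ≤ q → |(φ q)^2 - (φ p)^2| ≤ M2 := by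
    intro p q hp hq hpq
    have hp0 : 0 < p := ((hmemS p).mp hp).2
    have hIcc : Icc p q ⊆ S := hIccS p q hp hq
    set f' : ℝ → ℝ := fun x => 2 * φ x * deriv φ x with hf'
    -- open set U
    set U : Set ℝ := {x : ℝ | r₁ < x ∧ (x : EReal) < r₂ ∧ 0 < x} with hU
    have hUopen : IsOpen U := by
      have h1 : IsOpen {x : ℝ | r₁ < x} := isOpen_lt continuous_const continuous_id
      have h2 : IsOpen {x : ℝ | (x : EReal) < r₂} :=
        (isOpen_Iio (a := r₂)).preimage continuous_coe_real_ereal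
      have h3 : IsOpen {x : ℝ | (0:ℝ) < x} := isOpen_lt continuous_const continuous_id
      have : U = {x : ℝ | r₁ < x} ∩ ({x : ℝ | (x : EReal) < r₂} ∩ {x : ℝ | (0:ℝ) < x}) := by
        ext x; simp [hU, and_assoc]
      rw [this]; exact h1.inter (h2.inter h3)
    have hUS : U ⊆ S := by
      intro x hx; rw [hmemS]; exact ⟨⟨hx.1.le, hx.2.1.le⟩, hx.2.2⟩
    have hIooU : Ioo p q ⊆ U := by
      intro x hx
      refine ⟨lt_of_le_of_lt ((hmemS p).mp hp).1.1 hx.1,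
        lt_of_lt_of_le (EReal.coe_lt_coe_iff.mpr hx.2) ((hmemS q).mp hq).1.2,
        lt_trans hp0 hx.1⟩
    have hdiff : ∀ x ∈ Ioo p q, HasDerivAt φ (deriv φ x) x := by
      intro x hx
      have hx' : DifferentiableAt ℝ φ x :=
        ((hφ.mono hUS).differentiableOn one_ne_zero).differentiableAt (hUopen.mem_nhds (hIooU hx))
      exact hx'.hasDerivAt
    have hF : ∀ x ∈ Ioo p q, HasDerivWithinAt (fun y => (φ y)^2) (f' x) (Ioi x) x := by
      intro x hx
      have := ((hdiff x hx).pow 2).hasDerivWithinAt (s := Ioi x)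
      simpa [hf', pow_one, Pi.pow_def] using this
    -- AM-GM pointwise bound on Ioc p q
    have hptw : ∀ x ∈ Ioc p q,
        ENNReal.ofReal |f' x| ≤ ENNReal.ofReal (((deriv φ x)^2 + (φ x)^2 / x^2) * x) := by
      intro x hx
      have hx0 : 0 < x := lt_trans hp0 hx.1
      apply ENNReal.ofReal_le_ofReal
      have he : ((deriv φ x)^2 + (φ x)^2 / x^2) * x = (deriv φ x)^2 * x + (φ x)^2 / x := by
        field_simp
      rw [he, hf']
      have habs : |2 * φ x * deriv φ x| = 2 * |φ x| * |deriv φ x| := by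
        rw [abs_mul, abs_mul]; simp [abs_of_nonneg]
      rw [habs]
      have key : 2 * |φ x| * |deriv φ x| * x ≤ (deriv φ x)^2 * x^2 + (φ x)^2 := by
        nlinarith [sq_nonneg (|deriv φ x| * x - |φ x|), sq_abs (deriv φ x), sq_abs (φ x)]
      rw [← sub_nonneg]
      have heq : (deriv φ x)^2 * x + (φ x)^2 / x - 2 * |φ x| * |deriv φ x| =
          ((deriv φ x)^2 * x^2 + (φ x)^2 - 2 * |φ x| * |deriv φ x| * x) / x := by
        field_simp
      rw [heq]
      exact div_nonneg (by linarith) hx0.le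
    -- measurability
    have hφm : AEStronglyMeasurable φ (volume.restrict (Ioc p q)) :=
      ((hφ.continuousOn).mono (le_trans Ioc_subset_Icc_self hIcc)).aestronglyMeasurable
        measurableSet_Ioc
    have hf'm : AEStronglyMeasurable f' (volume.restrict (Ioc p q)) :=
      (aestronglyMeasurable_const.mul hφm).mul (measurable_deriv φ).aestronglyMeasurable
    -- lintegral bound
    have hlinb : (∫⁻ x in Ioc p q, ENNReal.ofReal |f' x|) ≤ N := by
      calc (∫⁻ x in Ioc p q, ENNReal.ofReal |f' x|)
          ≤ ∫⁻ x in Ioc p q, ENNReal.ofReal (((deriv φ x)^2 + (φ x)^2 / x^2) * x) :=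
            lintegral_mono_ae ((ae_restrict_iff' measurableSet_Ioc).mpr (ae_of_all _ hptw))
        _ ≤ N := hsubN _ (le_trans Ioc_subset_Icc_self hIcc)
    -- integrability
    have hint : IntegrableOn f' (Ioc p q) volume := by
      refine ⟨hf'm, ?_⟩
      rw [hasFiniteIntegral_iff_norm]
      calc (∫⁻ x in Ioc p q, ENNReal.ofReal ‖f' x‖)
          = ∫⁻ x in Ioc p q, ENNReal.ofReal |f' x| := by
            simp only [Real.norm_eq_abs]
        _ ≤ N := hlinb
        _ < ⊤ := hfin
    have hII : IntervalIntegrable f' volume p q := by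
      rw [intervalIntegrable_iff, Set.uIoc_of_le hpq]; exact hint
    -- FTC
    have hftc : ∫ x in p..q, f' x = (φ q)^2 - (φ p)^2 :=
      intervalIntegral.integral_eq_sub_of_hasDeriv_right_of_le hpq
        (((hφ.continuousOn).mono hIcc).pow 2) hF hII
    -- bound
    have habs1 : |(φ q)^2 - (φ p)^2| ≤ ∫ x in Ioc p q, |f' x| := by
      rw [← hftc, intervalIntegral.integral_of_le hpq]
      calc |∫ x in Ioc p q, f' x| ≤ ∫ x in Ioc p q, ‖f' x‖ := norm_integral_le_integral_norm f'
        _ = ∫ x in Ioc p q, |f' x| := by simp [Real.norm_eq_abs]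
    have habs2 : (∫ x in Ioc p q, |f' x|) ≤ M2 := by
      rw [integral_eq_lintegral_of_nonneg_ae (ae_of_all _ fun x => abs_nonneg _)
        (by simpa [Real.norm_eq_abs] using hf'm.norm)]
      exact ENNReal.toReal_mono hNtop hlinb
    linarith
  -- combine
  have hdiffb : |(φ r)^2 - (φ s₀)^2| ≤ M2 := by
    rcases le_total s₀ r with h | h
    · exact hosc s₀ r hs₀S hrS h
    · rw [abs_sub_comm]; exact hosc r s₀ hrS hs₀S h
  have hsq : (φ r)^2 ≤ 3 * M2 := by
    have := le_abs_self ((φ r)^2 - (φ s₀)^2)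
    linarith
  -- finish
  rw [hNeq, ENNReal.ofReal_rpow_of_nonneg hM2nn (by norm_num : (0:ℝ) ≤ 1/2),
    ← ENNReal.ofReal_mul (Real.sqrt_nonneg 3)]
  apply ENNReal.ofReal_le_ofReal
  have h12 : M2 ^ ((1:ℝ)/2) = Real.sqrt M2 := (Real.sqrt_eq_rpow M2).symm
  rw [h12]
  calc |φ r| = Real.sqrt ((φ r)^2) := (Real.sqrt_sq_eq_abs _).symm
    _ ≤ Real.sqrt (3 * M2) := Real.sqrt_le_sqrt hsq
    _ = Real.sqrt 3 * Real.sqrt M2 := Real.sqrt_mul (by norm_num) M2
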